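/- Let C* be a proper convex cone in R^m and let ξ_0 be a nonzero point on the boundary of the dual cone C. Then the set P_{ξ_0} = C* ∩ {p : ⟨ξ_0,p⟩ = 1} is unbounded. Consequently V(ξ) → ∞ as ξ tends to ξ_0 from the interior of C. -/

import Mathlib

open MeasureTheory Real Set Filter
open scoped ENNReal Pointwise Topology

noncomputable section

abbrev E (m : ℕ) : Type := EuclideanSpace ℝ (Fin m)

def IsProperCone {m : ℕ} (S : Set (E m)) : Prop :=
  IsClosed S ∧ Convex ℝ S ∧ (∀ c : ℝ, 0 ≤ c → ∀ p ∈ S, c • p ∈ S) ∧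
    (interior S).Nonempty ∧ ∀ p ∈ S, -p ∈ S → p = 0

def dualCone {m : ℕ} (S : Set (E m)) : Set (E m) :=
  {x | ∀ p ∈ S, 0 ≤ (inner ℝ x p : ℝ)}

def hess {n : ℕ} (f : E n → ℝ) (x : E n) : Matrix (Fin n) (Fin n) ℝ :=
  Matrix.of fun i j =>
    iteratedFDeriv ℝ 2 f x ![EuclideanSpace.single i 1, EuclideanSpace.single j 1]

lemma dual_isClosed {m : ℕ} (S : Set (E m)) : IsClosed (dualCone S) := by
  have h : dualCone S = ⋂ p ∈ S, {x : E m | 0 ≤ (inner ℝ x p : ℝ)} := by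
    ext x; simp [dualCone]
  rw [h]
  exact isClosed_biInter fun p _ =>
    isClosed_le continuous_const (continuous_id.inner continuous_const)

set_option maxHeartbeats 1000000 in
theorem stmt1 (m : ℕ) (Cstar : Set (E m)) (hC : IsProperCone Cstar)
    (ξ₀ : E m) (hξ₀ : ξ₀ ∈ frontier (dualCone Cstar)) (hne : ξ₀ ≠ 0) :
    ¬ Bornology.IsBounded (Cstar ∩ {p | (inner ℝ ξ₀ p : ℝ) = 1}) ∧
    Filter.Tendsto (fun ξ : E m => volume (Cstar ∩ {p | (inner ℝ ξ p : ℝ) ≤ 1}))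
      (nhdsWithin ξ₀ (interior (dualCone Cstar))) (nhds (⊤ : ℝ≥0∞)) := by
  obtain ⟨hclosed, hconv, hsmul, hint, _⟩ := hC
  have hξcl : ξ₀ ∈ closure (dualCone Cstar) := hξ₀.1
  have hξnotint : ξ₀ ∉ interior (dualCone Cstar) := hξ₀.2
  have hξmem : ξ₀ ∈ dualCone Cstar := (dual_isClosed Cstar).closure_eq ▸ hξcl
  -- addition closure of the cone
  have hadd : ∀ x ∈ Cstar, ∀ y ∈ Cstar, x + y ∈ Cstar := by
    intro x hx y hy
    have hmid : (1/2 : ℝ) • x + (1/2 : ℝ) • y ∈ Cstar :=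
      hconv hx hy (by norm_num) (by norm_num) (by norm_num)
    have := hsmul 2 (by norm_num) _ hmid
    have hrw : (2 : ℝ) • ((1/2 : ℝ) • x + (1/2 : ℝ) • y) = x + y := by
      rw [smul_add, smul_smul, smul_smul]; norm_num
    rwa [hrw] at this
  -- Claim A : there is a nonzero p in Cstar orthogonal to ξ₀
  obtain ⟨p, hpC, hp0, hpne⟩ : ∃ p ∈ Cstar, (inner ℝ ξ₀ p : ℝ) = 0 ∧ p ≠ 0 := by
    by_contra h
    push_neg at h
    apply hξnotint
    rcases eq_empty_or_nonempty (Cstar ∩ Metric.sphere (0 : E m) 1) with hK | hK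
    · -- Cstar ⊆ {0}, so dualCone is everything
      have hsub : Cstar ⊆ {(0 : E m)} := by
        intro q hq
        by_contra hq0
        have hq0' : q ≠ 0 := hq0
        have : ‖q‖⁻¹ • q ∈ Cstar ∩ Metric.sphere (0 : E m) 1 := by
          refine ⟨hsmul _ (by positivity) q hq, ?_⟩
          simp [norm_smul, abs_of_nonneg (inv_nonneg.2 (norm_nonneg q)),
            inv_mul_cancel₀ (norm_ne_zero_iff.2 hq0')]
        rw [hK] at this; exact this
      have : dualCone Cstar = univ := by
        ext x; simp only [dualCone, mem_setOf_eq, mem_univ, iff_true]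
        intro q hq
        have : q = 0 := hsub hq
        simp [this]
      rw [this, interior_univ]; trivial
    · -- compactness argument
      have hKc : IsCompact (Cstar ∩ Metric.sphere (0 : E m) 1) :=
        (isCompact_sphere (0 : E m) 1).inter_left hclosed
      obtain ⟨p₀, hp₀K, hmin⟩ := hKc.exists_isMinOn hK
        ((continuous_const.inner continuous_id).continuousOn
          (s := Cstar ∩ Metric.sphere (0 : E m) 1)
          (f := fun x : E m => (inner ℝ ξ₀ x : ℝ)))
      set ε : ℝ := (inner ℝ ξ₀ p₀ : ℝ) with hε
      have hp₀ne : p₀ ≠ 0 := by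
        intro h0
        have := hp₀K.2
        rw [h0] at this
        simp at this
      have hεpos : 0 < ε := by
        rcases (hξmem p₀ hp₀K.1).lt_or_eq with h' | h'
        · exact h'
        · exact absurd (h p₀ hp₀K.1 h'.symm) hp₀ne
      have hball : Metric.ball ξ₀ ε ⊆ dualCone Cstar := by
        intro ξ hξ q hq
        rcases eq_or_ne q 0 with rfl | hq0
        · simp
        have hu : ‖q‖⁻¹ • q ∈ Cstar ∩ Metric.sphere (0 : E m) 1 := by
          refine ⟨hsmul _ (by positivity) q hq, ?_⟩
          simp [norm_smul, abs_of_nonneg (inv_nonneg.2 (norm_nonneg q)),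
            inv_mul_cancel₀ (norm_ne_zero_iff.2 hq0)]
        have h1 : ε ≤ (inner ℝ ξ₀ (‖q‖⁻¹ • q) : ℝ) := hmin hu
        have h2 : (inner ℝ (ξ₀ - ξ) (‖q‖⁻¹ • q) : ℝ) ≤ ‖ξ₀ - ξ‖ := by
          have h3 := real_inner_le_norm (ξ₀ - ξ) (‖q‖⁻¹ • q)
          have h4 : ‖(‖q‖⁻¹ • q)‖ = 1 := by
            simp [norm_smul, abs_of_nonneg (inv_nonneg.2 (norm_nonneg q)),
              inv_mul_cancel₀ (norm_ne_zero_iff.2 hq0)]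
          rw [h4, mul_one] at h3; exact h3
        have hdist : ‖ξ₀ - ξ‖ < ε := by
          rw [Metric.mem_ball, dist_eq_norm] at hξ
          rwa [norm_sub_rev]
        have h5 : 0 ≤ (inner ℝ ξ (‖q‖⁻¹ • q) : ℝ) := by
          have h6 : (inner ℝ (ξ₀ - ξ) (‖q‖⁻¹ • q) : ℝ)
              = (inner ℝ ξ₀ (‖q‖⁻¹ • q) : ℝ) - (inner ℝ ξ (‖q‖⁻¹ • q) : ℝ) :=
            inner_sub_left _ _ _
          nlinarith
        have h7 : (inner ℝ ξ (‖q‖⁻¹ • q) : ℝ) = ‖q‖⁻¹ * (inner ℝ ξ q : ℝ) :=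
          real_inner_smul_right _ _ _
        rw [h7] at h5
        have hqn : (0:ℝ) < ‖q‖⁻¹ := inv_pos.2 (norm_pos_iff.2 hq0)
        nlinarith
      exact interior_maximal hball Metric.isOpen_ball (Metric.mem_ball_self hεpos)
  -- Claim B : an interior ball, with positive pairing against ξ₀
  obtain ⟨z₀, hz₀⟩ := hint
  obtain ⟨r₀, hr₀, hball₀⟩ := Metric.isOpen_iff.mp isOpen_interior z₀ hz₀
  have hball₀' : Metric.ball z₀ r₀ ⊆ Cstar := hball₀.trans interior_subset
  have hz₀C : z₀ ∈ Cstar := interior_subset hz₀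
  have ha : 0 < (inner ℝ ξ₀ z₀ : ℝ) := by
    rcases (hξmem z₀ hz₀C).lt_or_eq with h' | h'
    · exact h'
    exfalso; apply hne
    set t : ℝ := r₀ / (2 * (‖ξ₀‖ + 1)) with ht
    have htpos : 0 < t := by positivity
    have hmem : z₀ - t • ξ₀ ∈ Cstar := by
      apply hball₀'
      rw [Metric.mem_ball, dist_eq_norm]
      have : z₀ - t • ξ₀ - z₀ = -(t • ξ₀) := by abel
      rw [this, norm_neg, norm_smul, Real.norm_eq_abs, abs_of_pos htpos]
      have h8 : ‖ξ₀‖ < 2 * (‖ξ₀‖ + 1) := by nlinarith [norm_nonneg ξ₀]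
      calc t * ‖ξ₀‖ = r₀ * ‖ξ₀‖ / (2 * (‖ξ₀‖ + 1)) := by rw [ht]; ring
        _ < r₀ := by
            rw [div_lt_iff₀ (by positivity)]
            nlinarith [norm_nonneg ξ₀]
    have h9 := hξmem _ hmem
    have h10 : (inner ℝ ξ₀ (z₀ - t • ξ₀) : ℝ)
        = (inner ℝ ξ₀ z₀ : ℝ) - t * ‖ξ₀‖ ^ 2 := by
      rw [inner_sub_right, real_inner_smul_right, real_inner_self_eq_norm_sq]
    rw [h10, ← h'] at h9
    have h11 : ‖ξ₀‖ ^ 2 ≤ 0 := by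
      by_contra h13
      push_neg at h13
      nlinarith
    have h12 : ‖ξ₀‖ ^ 2 = 0 := le_antisymm h11 (sq_nonneg _)
    have h14 : ‖ξ₀‖ = 0 := by
      have := sq_eq_zero_iff.mp h12
      exact this
    exact norm_eq_zero.mp h14
  -- rescale : z' with inner ξ₀ z' = 1/2 and a ball of radius r' in Cstar
  set c : ℝ := (2 * (inner ℝ ξ₀ z₀ : ℝ))⁻¹ with hc
  have hcpos : 0 < c := by
    rw [hc]
    exact inv_pos.2 (by linarith)
  set z' : E m := c • z₀ with hz'
  have hz'C : Metric.ball z' (c * r₀) ⊆ Cstar := by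
    intro x hx
    have hx' : c⁻¹ • x ∈ Metric.ball z₀ r₀ := by
      rw [Metric.mem_ball, dist_eq_norm] at hx ⊢
      have : c⁻¹ • x - z₀ = c⁻¹ • (x - z') := by
        rw [hz', smul_sub, smul_smul, inv_mul_cancel₀ hcpos.ne', one_smul]
      rw [this, norm_smul, Real.norm_eq_abs, abs_of_pos (inv_pos.2 hcpos)]
      calc c⁻¹ * ‖x - z'‖ < c⁻¹ * (c * r₀) := by
            apply mul_lt_mul_of_pos_left hx (inv_pos.2 hcpos)
        _ = r₀ := by field_simp
    have := hsmul c hcpos.le _ (hball₀' hx')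
    rwa [smul_smul, mul_inv_cancel₀ hcpos.ne', one_smul] at this
  have hz'half : (inner ℝ ξ₀ z' : ℝ) = 1/2 := by
    have haz : (inner ℝ ξ₀ z₀ : ℝ) ≠ 0 := ha.ne'
    rw [hz', real_inner_smul_right, hc, mul_inv, mul_assoc, inv_mul_cancel₀ haz,
      mul_one]
    norm_num
  set r' : ℝ := min (c * r₀ / 2) (1 / (8 * (‖ξ₀‖ + 1))) with hr'
  have hr'pos : 0 < r' := by
    rw [hr']
    exact lt_min (by positivity) (by positivity)
  have hr'ball : Metric.ball z' r' ⊆ Cstar := by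
    refine (Metric.ball_subset_ball ?_).trans hz'C
    calc r' ≤ c * r₀ / 2 := min_le_left _ _
      _ ≤ c * r₀ := by nlinarith
  have hr'small : r' * ‖ξ₀‖ ≤ 1/8 := by
    have h1 : r' ≤ 1 / (8 * (‖ξ₀‖ + 1)) := min_le_right _ _
    have h2 : 0 < ‖ξ₀‖ + 1 := by positivity
    calc r' * ‖ξ₀‖ ≤ (1 / (8 * (‖ξ₀‖ + 1))) * ‖ξ₀‖ :=
          mul_le_mul_of_nonneg_right h1 (norm_nonneg _)
      _ ≤ 1/8 := by rw [div_mul_eq_mul_div, div_le_div_iff₀ (by positivity) (by norm_num)]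
                    nlinarith [norm_nonneg ξ₀]
  -- the small ball pairs below 5/8 against ξ₀
  have hball58 : ∀ x ∈ Metric.ball z' r', (inner ℝ ξ₀ x : ℝ) ≤ 5/8 := by
    intro x hx
    have h1 : (inner ℝ ξ₀ x : ℝ) = (inner ℝ ξ₀ z' : ℝ) + (inner ℝ ξ₀ (x - z') : ℝ) := by
      rw [← inner_add_right]; congr 1; abel
    have h2 : (inner ℝ ξ₀ (x - z') : ℝ) ≤ ‖ξ₀‖ * ‖x - z'‖ := real_inner_le_norm _ _
    rw [Metric.mem_ball, dist_eq_norm] at hx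
    have h3 : ‖ξ₀‖ * ‖x - z'‖ ≤ ‖ξ₀‖ * r' := by nlinarith [norm_nonneg ξ₀, norm_nonneg (x - z')]
    rw [h1, hz'half]
    nlinarith
  -- normalized p
  set p' : E m := ‖p‖⁻¹ • p with hp'
  have hp'C : p' ∈ Cstar := hsmul _ (by positivity) p hpC
  have hp'norm : ‖p'‖ = 1 := by
    rw [hp', norm_smul, Real.norm_eq_abs, abs_of_nonneg (inv_nonneg.2 (norm_nonneg p)),
      inv_mul_cancel₀ (norm_ne_zero_iff.2 hpne)]
  have hp'0 : (inner ℝ ξ₀ p' : ℝ) = 0 := by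
    rw [hp', real_inner_smul_right, hp0, mul_zero]
  constructor
  · -- Part 1 : unboundedness
    intro hbdd
    obtain ⟨R, hR⟩ := (isBounded_iff_forall_norm_le).mp hbdd
    obtain ⟨q, hqC, hq1⟩ : ∃ q ∈ Cstar, (inner ℝ ξ₀ q : ℝ) = 1 :=
      ⟨((inner ℝ ξ₀ z₀ : ℝ))⁻¹ • z₀, hsmul _ (inv_nonneg.2 ha.le) _ hz₀C, by
        rw [real_inner_smul_right]; exact inv_mul_cancel₀ ha.ne'⟩
    set t : ℝ := |R| + ‖q‖ + 1 with htdef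
    have htpos : 0 < t := by positivity
    have hmem : q + t • p' ∈ Cstar ∩ {x | (inner ℝ ξ₀ x : ℝ) = 1} := by
      refine ⟨hadd _ hqC _ (hsmul t htpos.le _ hp'C), ?_⟩
      simp only [mem_setOf_eq]
      rw [inner_add_right, real_inner_smul_right, hp'0, hq1]; ring
    have hnorm := hR _ hmem
    have h1 : ‖t • p'‖ ≤ ‖q + t • p'‖ + ‖q‖ := by
      have := norm_sub_le (q + t • p') q
      have h2 : q + t • p' - q = t • p' := by abel
      rw [h2] at this; linarith
    rw [norm_smul, Real.norm_eq_abs, abs_of_pos htpos, hp'norm, mul_one] at h1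
    rw [htdef] at h1
    have := abs_nonneg R
    have := le_abs_self R
    linarith
  · -- Part 2 : volume blows up
    apply ENNReal.tendsto_nhds_top
    intro n
    set v : ℝ≥0∞ := volume (Metric.ball z' r') with hv
    have hv0 : 0 < v := Metric.measure_ball_pos volume z' hr'pos
    have hvtop : v < ⊤ := measure_ball_lt_top
    obtain ⟨N, hN⟩ := ENNReal.exists_nat_gt
      ((ENNReal.div_lt_top (by simp) hv0.ne' : (n : ℝ≥0∞) / v < ⊤).ne)
    have hNv : (n : ℝ≥0∞) < N * v := by
      rwa [ENNReal.div_lt_iff (Or.inl hv0.ne') (Or.inl hvtop.ne)] at hN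
    set B : ℝ := ‖z'‖ + 2 * r' * N + r' with hB
    have hBpos : 0 < B + 1 := by positivity
    set δ : ℝ := (1/8) / (B + 1) with hδ
    have hδpos : 0 < δ := by positivity
    filter_upwards [mem_nhdsWithin_of_mem_nhds (Metric.ball_mem_nhds ξ₀ hδpos)]
      with ξ hξball
    -- centers
    set ctr : ℕ → E m := fun k => z' + (2 * r' * k) • p' with hctr
    -- each ball lies in the body
    have hsubset : ∀ k < N, Metric.ball (ctr k) r' ⊆
        Cstar ∩ {x | (inner ℝ ξ x : ℝ) ≤ 1} := by
      intro k hk y hy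
      have hx : y - (2 * r' * k) • p' ∈ Metric.ball z' r' := by
        rw [Metric.mem_ball, dist_eq_norm] at hy ⊢
        have : y - (2 * r' * k) • p' - z' = y - ctr k := by
          rw [hctr]; show y - (2 * r' * k) • p' - z' = y - (z' + (2 * r' * k) • p')
          rw [sub_add_eq_sub_sub, sub_right_comm]
        rw [this]; exact hy
      have hyC : y ∈ Cstar := by
        have h1 := hadd _ (hr'ball hx) _ (hsmul (2 * r' * k) (by positivity) _ hp'C)
        have h2 : y - (2 * r' * k) • p' + (2 * r' * k) • p' = y := by abel
        rwa [h2] at h1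
      refine ⟨hyC, ?_⟩
      simp only [mem_setOf_eq]
      have hy0 : (inner ℝ ξ₀ y : ℝ) ≤ 5/8 := by
        have h1 : (inner ℝ ξ₀ y : ℝ) = (inner ℝ ξ₀ (y - (2 * r' * k) • p') : ℝ)
            + (2 * r' * k) * (inner ℝ ξ₀ p' : ℝ) := by
          rw [← real_inner_smul_right, ← inner_add_right]
          congr 1; abel
        rw [h1, hp'0, mul_zero, add_zero]
        exact hball58 _ hx
      have hynorm : ‖y‖ ≤ B := by
        have h1 : ‖y - ctr k‖ < r' := by
          rw [Metric.mem_ball, dist_eq_norm] at hy; exact hy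
        have h2 : ‖ctr k‖ ≤ ‖z'‖ + 2 * r' * k := by
          have hnn : (0:ℝ) ≤ 2 * r' * k :=
            mul_nonneg (by linarith [hr'pos]) (Nat.cast_nonneg k)
          have hsm : ‖(2 * r' * (k:ℝ)) • p'‖ = 2 * r' * k := by
            rw [norm_smul, hp'norm, mul_one, Real.norm_eq_abs, abs_of_nonneg hnn]
          calc ‖ctr k‖ ≤ ‖z'‖ + ‖(2 * r' * (k:ℝ)) • p'‖ := by
                rw [hctr]; exact norm_add_le _ _
            _ = ‖z'‖ + 2 * r' * k := by rw [hsm]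
        have h3 : (k : ℝ) ≤ N := by exact_mod_cast hk.le
        have h4 : ‖y‖ ≤ ‖y - ctr k‖ + ‖ctr k‖ := by
          have := norm_add_le (y - ctr k) (ctr k)
          have h5 : y - ctr k + ctr k = y := by abel
          rwa [h5] at this
        rw [hB]
        nlinarith [hr'pos]
      have hdiff : (inner ℝ (ξ - ξ₀) y : ℝ) ≤ δ * B := by
        have h1 := real_inner_le_norm (ξ - ξ₀) y
        have h2 : ‖ξ - ξ₀‖ < δ := by
          rw [Metric.mem_ball, dist_eq_norm] at hξball; exact hξball
        nlinarith [norm_nonneg (ξ - ξ₀), norm_nonneg y]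
      have hsplit : (inner ℝ ξ y : ℝ) = (inner ℝ ξ₀ y : ℝ) + (inner ℝ (ξ - ξ₀) y : ℝ) := by
        rw [← inner_add_left]; congr 1; abel
      have hδB : δ * B ≤ 1/8 := by
        rw [hδ, div_mul_eq_mul_div, div_le_iff₀ hBpos]
        nlinarith [hr'pos, norm_nonneg z',
          mul_nonneg hr'pos.le (Nat.cast_nonneg (α := ℝ) N)]
      calc (inner ℝ ξ y : ℝ) = (inner ℝ ξ₀ y : ℝ) + (inner ℝ (ξ - ξ₀) y : ℝ) := hsplit
        _ ≤ 5/8 + 1/8 := add_le_add hy0 (hdiff.trans hδB)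
        _ ≤ 1 := by norm_num
    -- disjointness of the balls
    have hdisj : (↑(Finset.range N) : Set ℕ).Pairwise
        (Function.onFun Disjoint fun k => Metric.ball (ctr k) r') := by
      intro k _ l _ hkl
      have hdist : 2 * r' ≤ dist (ctr k) (ctr l) := by
        rw [hctr]
        simp only
        rw [dist_add_left (z') ((2 * r' * k) • p') ((2 * r' * l) • p'), dist_eq_norm,
          ← sub_smul, norm_smul, Real.norm_eq_abs, hp'norm, mul_one]
        have h1 : (1 : ℝ) ≤ |(k : ℝ) - l| := by
          rcases hkl.lt_or_gt with h | h
          · rw [abs_sub_comm]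
            have hcast : (k : ℝ) + 1 ≤ l := by exact_mod_cast h
            rw [abs_of_nonneg (by linarith)]
            linarith
          · have hcast : (l : ℝ) + 1 ≤ k := by exact_mod_cast h
            rw [abs_of_nonneg (by linarith)]
            linarith
        have h3 : |2 * r' * k - 2 * r' * l| = 2 * r' * |(k:ℝ) - l| := by
          rw [← mul_sub, abs_mul, abs_of_nonneg (by positivity : (0:ℝ) ≤ 2 * r')]
        rw [h3]
        nlinarith [hr'pos]
      exact Metric.ball_disjoint_ball (by linarith)
    -- volume computation
    have hmeas : ∀ k ∈ Finset.range N, MeasurableSet (Metric.ball (ctr k) r') :=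
      fun k _ => measurableSet_ball
    have hunion := measure_biUnion_finset hdisj hmeas (μ := volume)
    have hcenter : ∀ k, volume (Metric.ball (ctr k) r') = v := by
      intro k
      rw [hv, Measure.addHaar_ball_center volume (ctr k),
        Measure.addHaar_ball_center volume z']
    calc (n : ℝ≥0∞) < N * v := hNv
      _ = ∑ k ∈ Finset.range N, volume (Metric.ball (ctr k) r') := by
          rw [Finset.sum_congr rfl (fun k _ => hcenter k), Finset.sum_const,
            Finset.card_range, nsmul_eq_mul]
      _ = volume (⋃ k ∈ Finset.range N, Metric.ball (ctr k) r') := hunion.symm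
      _ ≤ volume (Cstar ∩ {x | (inner ℝ ξ x : ℝ) ≤ 1}) := by
          apply measure_mono
          intro y hy
          simp only [mem_iUnion] at hy
          obtain ⟨k, hk, hyk⟩ := hy
          exact hsubset k (Finset.mem_range.mp hk) hyk
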